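/- Let M : ℕ → ℝ be positive such that (M k)^(1/k) is monotone increasing. If (M k)^(1/k) → ∞ then M (k+1) / M k → ∞. -/
import Mathlib


open Filter

theorem roots_to_infty_implies_quotients (M : ℕ → ℝ)
    (hM : ∀ k, 0 < M k)
    (hmono : ∀ j k : ℕ, 1 ≤ j → j ≤ k →
      (M j) ^ ((1 : ℝ) / j) ≤ (M k) ^ ((1 : ℝ) / k))
    (hinf : Tendsto (fun k : ℕ => (M k) ^ ((1 : ℝ) / k)) atTop atTop) :
    Tendsto (fun k : ℕ => M (k + 1) / M k) atTop atTop := by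
  have h1 : Tendsto (fun k : ℕ => (M (k + 1)) ^ ((1 : ℝ) / ((k + 1 : ℕ) : ℝ))) atTop atTop :=
    hinf.comp (tendsto_add_atTop_nat 1)
  refine tendsto_atTop_mono' atTop ?_ h1
  filter_upwards [eventually_ge_atTop 1] with k hk
  set x := (M (k + 1)) ^ ((1 : ℝ) / ((k + 1 : ℕ) : ℝ)) with hxdef
  have hx0 : 0 < x := Real.rpow_pos_of_pos (hM _) _
  have hle : (M k) ^ ((1 : ℝ) / k) ≤ x := hmono k (k + 1) hk (Nat.le_succ k)
  have hk0 : (k : ℝ) ≠ 0 := by exact_mod_cast Nat.one_le_iff_ne_zero.mp hk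
  have hMk : M k ≤ x ^ (k : ℝ) := by
    have : ((M k) ^ ((1 : ℝ) / k)) ^ (k : ℝ) = M k := by
      rw [← Real.rpow_mul (hM k).le, one_div_mul_cancel hk0, Real.rpow_one]
    calc M k = ((M k) ^ ((1 : ℝ) / k)) ^ (k : ℝ) := this.symm
      _ ≤ x ^ (k : ℝ) :=
        Real.rpow_le_rpow (Real.rpow_nonneg (hM k).le _) hle (by positivity)
  have hMk1 : M (k + 1) = x ^ ((k : ℝ) + 1) := by
    have hne : (((k + 1 : ℕ)) : ℝ) ≠ 0 := by positivity
    rw [hxdef, ← Real.rpow_mul (hM (k + 1)).le,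
      show (k : ℝ) + 1 = ((k + 1 : ℕ) : ℝ) by push_cast; ring,
      one_div_mul_cancel hne, Real.rpow_one]
  have key : x ≤ M (k + 1) / M k := by
    have h2 : x ^ ((k : ℝ) + 1) / x ^ (k : ℝ) = x := by
      rw [← Real.rpow_sub hx0]; simp
    calc x = x ^ ((k : ℝ) + 1) / x ^ (k : ℝ) := h2.symm
      _ ≤ x ^ ((k : ℝ) + 1) / M k :=
        div_le_div_of_nonneg_left (by positivity) (hM k) hMk
      _ = M (k + 1) / M k := by rw [hMk1]
  exact key
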